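/- On ℝ³ with coordinates (x,t,u), the Lie bracket of the vector fields V₅ = −(a₂x+a₁)e^{-2a₂t}∂/∂x + e^{-2a₂t}∂/∂t − 2(a₂x+a₁)²e^{-2a₂t}u·∂/∂u and V₆ = e^{2a₂t}∂/∂t + (a₂x+a₁)e^{2a₂t}∂/∂x − a₂u·e^{2a₂t}∂/∂u equals 4a₂·V₄ − 2a₂²·V₂, where V₄ = ∂/∂t and V₂ = u·∂/∂u; that is, [V₅,V₆] = 4a₂V₄ − 2a₂²V₂. -/

import Mathlib

noncomputable section

/-- Lie bracket of vector fields on `ℝ³` (coordinates `(x, t, u)`):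
`[V, W](p) = DW(p)(V(p)) − DV(p)(W(p))`. -/
def lieBracket (V W : ℝ × ℝ × ℝ → ℝ × ℝ × ℝ) (p : ℝ × ℝ × ℝ) : ℝ × ℝ × ℝ :=
  fderiv ℝ W p (V p) - fderiv ℝ V p (W p)

theorem stmt_17 (a1 a2 : ℝ) (ha2 : a2 ≠ 0) :
    ∀ p : ℝ × ℝ × ℝ,
      lieBracket
        (fun p => (-(a2 * p.1 + a1) * Real.exp (-2 * a2 * p.2.1),
          Real.exp (-2 * a2 * p.2.1),
          -2 * (a2 * p.1 + a1) ^ 2 * Real.exp (-2 * a2 * p.2.1) * p.2.2))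
        (fun p => ((a2 * p.1 + a1) * Real.exp (2 * a2 * p.2.1),
          Real.exp (2 * a2 * p.2.1),
          -(a2 * p.2.2) * Real.exp (2 * a2 * p.2.1))) p
        = (4 * a2) • ((0 : ℝ), (1 : ℝ), (0 : ℝ))
            - (2 * a2 ^ 2) • ((0 : ℝ), (0 : ℝ), p.2.2) := by
  intro p
  have hx : HasFDerivAt (fun q : ℝ × ℝ × ℝ => q.1) (ContinuousLinearMap.fst ℝ ℝ (ℝ × ℝ)) p := hasFDerivAt_fst
  have hsnd : HasFDerivAt (fun q : ℝ × ℝ × ℝ => q.2) (ContinuousLinearMap.snd ℝ ℝ (ℝ × ℝ)) p := hasFDerivAt_snd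
  have ht : HasFDerivAt (fun q : ℝ × ℝ × ℝ => q.2.1) _ p := hsnd.fst
  have hu : HasFDerivAt (fun q : ℝ × ℝ × ℝ => q.2.2) _ p := hsnd.snd
  have hlin : HasFDerivAt (fun q : ℝ × ℝ × ℝ => a2 * q.1 + a1) _ p :=
    (hx.const_mul a2).add_const a1
  have hE1 : HasFDerivAt (fun q : ℝ × ℝ × ℝ => Real.exp (-2 * a2 * q.2.1)) _ p :=
    (ht.const_mul (-2 * a2)).exp
  have hE2 : HasFDerivAt (fun q : ℝ × ℝ × ℝ => Real.exp (2 * a2 * q.2.1)) _ p :=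
    (ht.const_mul (2 * a2)).exp
  have hsq : HasFDerivAt (fun q : ℝ × ℝ × ℝ => (a2 * q.1 + a1) ^ 2)
      ((a2 * p.1 + a1) • (a2 • ContinuousLinearMap.fst ℝ ℝ (ℝ × ℝ)) +
        (a2 * p.1 + a1) • (a2 • ContinuousLinearMap.fst ℝ ℝ (ℝ × ℝ))) p := by
    simp only [pow_two]; exact hlin.mul hlin
  have hV : HasFDerivAt
      (fun q : ℝ × ℝ × ℝ => (-(a2 * q.1 + a1) * Real.exp (-2 * a2 * q.2.1),
        Real.exp (-2 * a2 * q.2.1),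
        -2 * (a2 * q.1 + a1) ^ 2 * Real.exp (-2 * a2 * q.2.1) * q.2.2)) _ p :=
    HasFDerivAt.prodMk (HasFDerivAt.mul (HasFDerivAt.neg hlin) hE1)
      (HasFDerivAt.prodMk hE1 (HasFDerivAt.mul (HasFDerivAt.mul (HasFDerivAt.const_mul hsq (-2)) hE1) hu))
  have hW : HasFDerivAt
      (fun q : ℝ × ℝ × ℝ => ((a2 * q.1 + a1) * Real.exp (2 * a2 * q.2.1),
        Real.exp (2 * a2 * q.2.1),
        -(a2 * q.2.2) * Real.exp (2 * a2 * q.2.1))) _ p :=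
    HasFDerivAt.prodMk (HasFDerivAt.mul hlin hE2)
      (HasFDerivAt.prodMk hE2 (HasFDerivAt.mul (HasFDerivAt.neg (HasFDerivAt.const_mul hu a2)) hE2))
  rw [lieBracket, hV.fderiv, hW.fderiv]
  have hexp : Real.exp (-2 * a2 * p.2.1) * Real.exp (2 * a2 * p.2.1) = 1 := by
    rw [← Real.exp_add]; ring_nf; exact Real.exp_zero
  simp only [ContinuousLinearMap.prod_apply, ContinuousLinearMap.add_apply,
    ContinuousLinearMap.smul_apply, ContinuousLinearMap.coe_smul',
    ContinuousLinearMap.coe_fst', ContinuousLinearMap.coe_snd',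
    ContinuousLinearMap.comp_apply, ContinuousLinearMap.neg_apply,
    ContinuousLinearMap.coe_comp', Function.comp_apply, Pi.smul_apply,
    smul_eq_mul, Prod.smul_mk, Prod.mk_sub_mk, Prod.mk.injEq]
  exact ⟨by ring, by linear_combination (4 * a2) * hexp,
    by linear_combination (-2 * a2 ^ 2 * p.2.2) * hexp⟩
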